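/- The occluded estimator is unbiased: when the occlusion process {(X_t,S_t,Y_t)}_{t=1}^n is started in stationarity (X_1,S_1,Y_1) ∼ P_occ, E[μ̂_occ] = P(f). -/

import Mathlib

open MeasureTheory ProbabilityTheory Filter

noncomputable section

namespace OcclusionPaper

variable {X : Type*} [MeasurableSpace X]

/-- The mean `μ_i = P_i(f)` of `f` under `P_i`, i.e. `P` conditioned to the region `A i`. -/
def regionMean (P : Measure X) {R : ℕ} (A : Fin R → Set X) (f : X → ℝ) (i : Fin R) : ℝ :=
  ∫ x, f x ∂(P[|A i])

/-- The resolution `→Pf(x) = ∑ i, μ_i 1{x ∈ A i}`. -/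
def res (P : Measure X) {R : ℕ} (A : Fin R → Set X) (f : X → ℝ) : X → ℝ :=
  fun x => ∑ i, Set.indicator (A i) (fun _ => regionMean P A f i) x

/-- The orthogonal counterpart `←Pf = f − →Pf`. -/
def orth (P : Measure X) {R : ℕ} (A : Fin R → Set X) (f : X → ℝ) : X → ℝ :=
  fun x => f x - res P A f x

/-- Covariance of `g` and `h` under `P`. -/
def covP {Y : Type*} [MeasurableSpace Y] (P : Measure Y) (g h : Y → ℝ) : ℝ :=
  (∫ y, g y * h y ∂P) - (∫ y, g y ∂P) * (∫ y, h y ∂P)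

/-- Action of the `k`-th iterate of a (measure-valued) transition kernel on a function:
`K^k g`. -/
def kerIter {Y : Type*} [MeasurableSpace Y] (κ : Y → Measure Y) : ℕ → (Y → ℝ) → Y → ℝ
  | 0, g => g
  | (k + 1), g => fun y => ∫ z, kerIter κ k g z ∂(κ y)

/-- The joint law of the first `n` steps `(X_1, …, X_n)` of a Markov chain with initial
distribution `μ` and transition kernel `κ`. -/
def chainLawF {Y : Type*} [MeasurableSpace Y] (μ : Measure Y) (κ : Y → Measure Y) :
    (n : ℕ) → Measure (Fin n → Y)
  | 0 => Measure.dirac (fun i : Fin 0 => i.elim0)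
  | 1 => μ.map (fun x _ => x)
  | (n + 2) => (chainLawF μ κ (n + 1)).bind
      (fun xs => (κ (xs (Fin.last n))).map (fun z => Fin.snoc xs z))

/-- The distribution `μ K^t` of a Markov chain with kernel `κ` after `t` steps from `μ`. -/
def evolveF {Y : Type*} [MeasurableSpace Y] (κ : Y → Measure Y) (μ : Measure Y) : ℕ → Measure Y
  | 0 => μ
  | (t + 1) => (evolveF κ μ t).bind κ

/-- `N_i`: the number of times the finite trajectory `xs` visits region `A i`. -/
def Nreg {R n : ℕ} (A : Fin R → Set X) (xs : Fin n → X) (i : Fin R) : ℕ :=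
  ∑ t : Fin n, Set.indicator (A i) (fun _ => (1 : ℕ)) (xs t)

/-- The fully occluded (ideal) estimator
`μ̂_ideal = n⁻¹ ∑_{i=1}^R ∑_{j=1}^{N_i} f(Y_{ij})`, evaluated on an outcome consisting of the
chain trajectory together with, for each region, an array of draws from `P_i`. -/
def idealEst {R n : ℕ} (A : Fin R → Set X) (f : X → ℝ)
    (ω : (Fin n → X) × (Fin R → Fin n → X)) : ℝ :=
  (n : ℝ)⁻¹ * ∑ i : Fin R, ∑ j : Fin n, if (j : ℕ) < Nreg A ω.1 i then f (ω.2 i j) else 0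

/-- The joint law of the chain `(X_1,…,X_n)` together with, for each region `i`, an i.i.d.
array `(Y_{ij})_j` of draws from `P_i`, independent of the chain (hence in particular
conditionally independent of it given the visited regions). -/
def jointLaw (P : Measure X) {R : ℕ} (A : Fin R → Set X) (κ : X → Measure X) (n : ℕ) :
    Measure ((Fin n → X) × (Fin R → Fin n → X)) :=
  (chainLawF P κ n).prod (Measure.pi fun i => Measure.pi fun _ : Fin n => P[|A i])

/-- Bernoulli distribution on `Bool` with success probability `p` (`true` has mass `p`). -/
def bern (p : ℝ) : Measure Bool :=
  ENNReal.ofReal p • Measure.dirac true + ENNReal.ofReal (1 - p) • Measure.dirac false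

/-- The conditional law of the pair `(s, y)` given the current chain position `x`:
`s ~ Bernoulli(α(ρ x))` and `y ~ P_{ρ x}` independently. -/
def mark (P : Measure X) {R : ℕ} (A : Fin R → Set X) (ρ : X → Fin R) (α : Fin R → ℝ) (x : X) :
    Measure (Bool × X) :=
  (bern (α (ρ x))).prod (P[|A (ρ x)])

/-- The occlusion kernel `K_occ((x,s,y) → (dx',s',dy'))
 = K(x → dx')·(α(ρ x')1{s'=1} + (1−α(ρ x'))1{s'=0})·P_{ρ x'}(dy')`. -/
def Kocc (P : Measure X) {R : ℕ} (A : Fin R → Set X) (ρ : X → Fin R) (α : Fin R → ℝ)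
    (κ : X → Measure X) : X × Bool × X → Measure (X × Bool × X) :=
  fun z => (κ z.1).bind fun x' => (mark P A ρ α x').map fun sy => (x', sy.1, sy.2)

/-- The measure `P_occ(dx,s,dy) = P(dx)·(α(ρ x)1{s=1} + (1−α(ρ x))1{s=0})·P_{ρ x}(dy)`. -/
def Pocc (P : Measure X) {R : ℕ} (A : Fin R → Set X) (ρ : X → Fin R) (α : Fin R → ℝ) :
    Measure (X × Bool × X) :=
  P.bind fun x => (mark P A ρ α x).map fun sy => (x, sy.1, sy.2)

/-- `f_occ(x,s,y) = 1{s=0} f(x) + 1{s=1} f(y)`. -/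
def focc (f : X → ℝ) : X × Bool × X → ℝ :=
  fun z => if z.2.1 then f z.2.2 else f z.1

/-- `f_α(x) = (1 − α(ρ x)) f(x) + α(ρ x) →Pf(x)`. -/
def falpha (P : Measure X) {R : ℕ} (A : Fin R → Set X) (ρ : X → Fin R) (α : Fin R → ℝ)
    (f : X → ℝ) : X → ℝ :=
  fun x => (1 - α (ρ x)) * f x + α (ρ x) * res P A f x

/-- `f_a(x) = (1 − α(ρ x)) f(x)`. -/
def fa {R : ℕ} (ρ : X → Fin R) (α : Fin R → ℝ) (f : X → ℝ) : X → ℝ :=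
  fun x => (1 - α (ρ x)) * f x

end OcclusionPaper


namespace OcclusionPaper

section AuxLemmas

variable {α' β' γ' : Type*} [MeasurableSpace α'] [MeasurableSpace β'] [MeasurableSpace γ']

private lemma map_bind' {μ : Measure α'} {κ : α' → Measure β'} {g : β' → γ'}
    (hκ : Measurable κ) (hg : Measurable g) :
    (μ.bind κ).map g = μ.bind (fun x => (κ x).map g) := by
  have hmeas : Measurable (fun x => (κ x).map g) := (Measure.measurable_map g hg).comp hκ
  ext s hs
  rw [Measure.map_apply hg hs, Measure.bind_apply (hg hs) hκ.aemeasurable, Measure.bind_apply hs hmeas.aemeasurable]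
  exact lintegral_congr fun x => (Measure.map_apply hg hs).symm

private lemma bind_map' {μ : Measure α'} {g : α' → β'} {κ : β' → Measure γ'}
    (hg : Measurable g) (hκ : Measurable κ) :
    (μ.map g).bind κ = μ.bind (fun x => κ (g x)) := by
  ext s hs
  have h2 : Measurable (fun b => κ b s) := (Measure.measurable_coe hs).comp hκ
  have h3 : Measurable (fun x => κ (g x)) := hκ.comp hg
  rw [Measure.bind_apply hs hκ.aemeasurable, lintegral_map h2 hg, Measure.bind_apply hs h3.aemeasurable]

private lemma bern_isProb {p : ℝ} (h0 : 0 ≤ p) (h1 : p ≤ 1) : IsProbabilityMeasure (bern p) := by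
  constructor
  simp [bern, ← ENNReal.ofReal_add h0 (by linarith : (0:ℝ) ≤ 1 - p)]

private lemma bern_prod_eq {p : ℝ} (ν : Measure β') [SFinite ν] :
    (bern p).prod ν
      = ENNReal.ofReal p • ν.map (Prod.mk true)
        + ENNReal.ofReal (1 - p) • ν.map (Prod.mk false) := by
  ext s hs
  rw [Measure.prod_apply hs]
  have hmeas : Measurable (fun x : Bool => ν (Prod.mk x ⁻¹' s)) := measurable_of_countable _
  rw [show bern p = ENNReal.ofReal p • Measure.dirac true
      + ENNReal.ofReal (1 - p) • Measure.dirac false from rfl]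
  rw [lintegral_add_measure, lintegral_smul_measure, lintegral_smul_measure,
    lintegral_dirac' _ hmeas, lintegral_dirac' _ hmeas]
  simp [Measure.map_apply measurable_prodMk_left hs]

private lemma integrable_bern_prod {p : ℝ} (ν : Measure β') [SFinite ν] {g : Bool × β' → ℝ}
    (hg : Measurable g)
    (h1i : Integrable (fun y => g (true, y)) ν) (h0i : Integrable (fun y => g (false, y)) ν) :
    Integrable g ((bern p).prod ν) := by
  rw [bern_prod_eq]
  have htrue : Integrable g (ν.map (Prod.mk true)) :=
    (integrable_map_measure hg.aestronglyMeasurable measurable_prodMk_left.aemeasurable).2 h1i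
  have hfalse : Integrable g (ν.map (Prod.mk false)) :=
    (integrable_map_measure hg.aestronglyMeasurable measurable_prodMk_left.aemeasurable).2 h0i
  exact (htrue.smul_measure ENNReal.ofReal_ne_top).add_measure
    (hfalse.smul_measure ENNReal.ofReal_ne_top)

private lemma integral_bern_prod {p : ℝ} (h0 : 0 ≤ p) (h1 : p ≤ 1) (ν : Measure β') [SFinite ν]
    {g : Bool × β' → ℝ} (hg : Measurable g)
    (h1i : Integrable (fun y => g (true, y)) ν) (h0i : Integrable (fun y => g (false, y)) ν) :
    ∫ z, g z ∂((bern p).prod ν)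
      = p * ∫ y, g (true, y) ∂ν + (1 - p) * ∫ y, g (false, y) ∂ν := by
  have htrue : Integrable g (ν.map (Prod.mk true)) :=
    (integrable_map_measure hg.aestronglyMeasurable measurable_prodMk_left.aemeasurable).2 h1i
  have hfalse : Integrable g (ν.map (Prod.mk false)) :=
    (integrable_map_measure hg.aestronglyMeasurable measurable_prodMk_left.aemeasurable).2 h0i
  rw [bern_prod_eq, integral_add_measure (htrue.smul_measure ENNReal.ofReal_ne_top)
      (hfalse.smul_measure ENNReal.ofReal_ne_top),
    integral_smul_measure, integral_smul_measure,
    integral_map measurable_prodMk_left.aemeasurable hg.aestronglyMeasurable,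
    integral_map measurable_prodMk_left.aemeasurable hg.aestronglyMeasurable,
    ENNReal.toReal_ofReal h0, ENNReal.toReal_ofReal (by linarith : (0:ℝ) ≤ 1 - p)]
  simp [smul_eq_mul]

variable {Z : Type*} [MeasurableSpace Z]

private lemma measurable_snocp (m : ℕ) :
    Measurable (fun p : (Fin (m+1) → Z) × Z => (Fin.snoc p.1 p.2 : Fin (m+2) → Z)) := by
  refine measurable_pi_lambda _ fun i => ?_
  induction i using Fin.lastCases with
  | last => simpa using measurable_snd
  | cast j => simpa using (show Measurable fun c : (Fin (m+1) → Z) × Z => c.1 j from (measurable_pi_apply j).comp measurable_fst)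

/-- The one-step path-extension kernel. -/
private def extk (κ : Kernel Z Z) (m : ℕ) : Kernel (Fin (m+1) → Z) (Fin (m+2) → Z) :=
  Kernel.map ((Kernel.deterministic (fun xs => xs) measurable_id) ×ₖ
      (κ.comap (fun xs => xs (Fin.last m)) (measurable_pi_apply _)))
    (fun p => Fin.snoc p.1 p.2)

private lemma extk_apply (κ : Kernel Z Z) [IsMarkovKernel κ] (m : ℕ) (xs : Fin (m+1) → Z) :
    extk κ m xs = (κ (xs (Fin.last m))).map (fun z => Fin.snoc xs z) := by
  rw [extk, Kernel.map_apply _ (measurable_snocp m), Kernel.prod_apply,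
    Kernel.deterministic_apply, Kernel.comap_apply, Measure.dirac_prod,
    Measure.map_map (measurable_snocp m) measurable_prodMk_left]
  rfl

private instance extk_isMarkov (κ : Kernel Z Z) [IsMarkovKernel κ] (m : ℕ) :
    IsMarkovKernel (extk κ m) :=
  Kernel.IsMarkovKernel.map _ (measurable_snocp m)

/-- In stationarity, every one-dimensional marginal of the chain law is the initial law. -/
private lemma chain_marginal (μ : Measure Z) [IsProbabilityMeasure μ]
    (κ : Kernel Z Z) [IsMarkovKernel κ] (hinv : μ.bind ⇑κ = μ) :
    ∀ n, ∀ t : Fin n, (chainLawF μ (⇑κ) n).map (fun xs => xs t) = μ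
  | 0, t => t.elim0
  | 1, t => by
      have hf : Measurable (fun (x : Z) (_ : Fin 1) => x) :=
        measurable_pi_lambda _ fun _ => measurable_id
      rw [chainLawF, Measure.map_map (measurable_pi_apply t) hf]
      exact Measure.map_id
  | (m+2), t => by
      have ih := chain_marginal μ κ hinv (m+1)
      have hstep : chainLawF μ (⇑κ) (m+2) = (chainLawF μ (⇑κ) (m+1)).bind ⇑(extk κ m) := by
        rw [chainLawF]
        congr 1
        funext xs
        exact (extk_apply κ m xs).symm
      rw [hstep, map_bind' (extk κ m).measurable (measurable_pi_apply t)]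
      have hpt : ∀ xs : Fin (m+1) → Z,
          (extk κ m xs).map (fun ys => ys t)
            = (κ (xs (Fin.last m))).map (fun z => (Fin.snoc xs z : Fin (m+2) → Z) t) := by
        intro xs
        have hsx : Measurable (fun z : Z => (Fin.snoc xs z : Fin (m+2) → Z)) :=
          (measurable_snocp m).comp measurable_prodMk_left
        rw [extk_apply, Measure.map_map (measurable_pi_apply t) hsx]
        rfl
      rw [funext hpt]
      induction t using Fin.lastCases with
      | last =>
          have hlast : ∀ xs : Fin (m+1) → Z,
              (κ (xs (Fin.last m))).map
                  (fun z => (Fin.snoc xs z : Fin (m+2) → Z) (Fin.last (m+1)))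
                = κ (xs (Fin.last m)) := by
            intro xs
            simp only [Fin.snoc_last]
            exact Measure.map_id
          rw [funext hlast, ← bind_map' (measurable_pi_apply (Fin.last m)) κ.measurable,
            ih (Fin.last m), hinv]
      | cast j =>
          have hcast : ∀ xs : Fin (m+1) → Z,
              (κ (xs (Fin.last m))).map
                  (fun z => (Fin.snoc xs z : Fin (m+2) → Z) (Fin.castSucc j))
                = Measure.dirac (xs j) := by
            intro xs
            simp only [Fin.snoc_castSucc]
            rw [Measure.map_const, measure_univ, one_smul]
          rw [funext hcast, Measure.bind_dirac_eq_map _ (measurable_pi_apply j)]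
          exact ih j

end AuxLemmas

end OcclusionPaper

namespace OcclusionPaper

/-- The occluded estimator is unbiased: when the occlusion process is
started in stationarity, `E[μ̂_occ] = P(f)`. -/
theorem occEst_unbiased
    {X : Type*} [MeasurableSpace X]
    (P : Measure X) [IsProbabilityMeasure P] {R : ℕ} (A : Fin R → Set X)
    (hA : ∀ i, MeasurableSet (A i))
    (hdisj : Pairwise fun i j => Disjoint (A i) (A j))
    (hcover : (⋃ i, A i) = Set.univ)
    (hpos : ∀ i, 0 < P (A i))
    (ρ : X → Fin R) (hρm : Measurable ρ) (hρ : ∀ x, x ∈ A (ρ x))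
    (α : Fin R → ℝ) (hα0 : ∀ i, 0 ≤ α i) (hα1 : ∀ i, α i ≤ 1)
    (K : Kernel X X) [IsMarkovKernel K] (hK : K.Invariant P)
    (f : X → ℝ) (hfm : Measurable f) (hf : MemLp f 2 P)
    (n : ℕ) (hn : 0 < n) :
    ∫ zs, (n : ℝ)⁻¹ * ∑ t : Fin n, focc f (zs t)
        ∂(chainLawF (Pocc P A ρ α) (Kocc P A ρ α (fun x => K x)) n)
      = ∫ x, f x ∂P := by
  classical
  -- probability of the conditional measures and the Bernoulli measures
  have hbern : ∀ i, IsProbabilityMeasure (bern (α i)) := fun i => bern_isProb (hα0 i) (hα1 i)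
  have hcondP : ∀ i, IsProbabilityMeasure (P[|A i]) :=
    fun i => cond_isProbabilityMeasure (hpos i).ne'
  -- the mark kernel
  have hmark : Measurable (fun x => mark P A ρ α x) :=
    (measurable_of_countable (fun i : Fin R => (bern (α i)).prod (P[|A i]))).comp hρm
  let markK : Kernel X (Bool × X) := ⟨fun x => mark P A ρ α x, hmark⟩
  have hmarkprob : ∀ x, IsProbabilityMeasure (mark P A ρ α x) := fun x => by
    haveI := hbern (ρ x); haveI := hcondP (ρ x)
    rw [mark]; infer_instance
  haveI : IsMarkovKernel markK := ⟨fun x => hmarkprob x⟩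
  let markBig : Kernel X (X × Bool × X) :=
    (Kernel.deterministic (fun x : X => x) measurable_id) ×ₖ markK
  haveI : IsMarkovKernel markBig := by rw [show markBig = _ from rfl]; infer_instance
  let m' : X → Measure (X × Bool × X) :=
    fun x => (mark P A ρ α x).map (fun sy => (x, sy.1, sy.2))
  have hmb : ∀ x, markBig x = m' x := by
    intro x
    show ((Kernel.deterministic (fun x : X => x) measurable_id) ×ₖ markK) x = _
    rw [Kernel.prod_apply, Kernel.deterministic_apply, Measure.dirac_prod]
    rfl
  have hm' : m' = ⇑markBig := funext fun x => (hmb x).symm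
  have hm'meas : Measurable m' := hm' ▸ markBig.measurable
  have hPb : Pocc P A ρ α = P.bind m' := rfl
  -- Pocc as a composition-product
  have hPocc : Pocc P A ρ α = P ⊗ₘ markK := by
    ext s hs
    rw [hPb, Measure.bind_apply hs hm'meas.aemeasurable, Measure.compProd_apply hs]
    refine lintegral_congr fun x => ?_
    have hι : Measurable (fun sy : Bool × X => (x, sy.1, sy.2)) := measurable_prodMk_left
    rw [show m' x = (mark P A ρ α x).map (fun sy => (x, sy.1, sy.2)) from rfl,
      Measure.map_apply hι hs]
    rfl
  haveI : IsProbabilityMeasure (Pocc P A ρ α) := by rw [hPocc]; infer_instance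
  -- the occlusion kernel as a kernel
  let KoccK : Kernel (X × Bool × X) (X × Bool × X) :=
    markBig ∘ₖ (K.comap (fun z : X × Bool × X => z.1) measurable_fst)
  haveI : IsMarkovKernel KoccK := by rw [show KoccK = _ from rfl]; infer_instance
  have hKocc : Kocc P A ρ α (fun x => K x) = ⇑KoccK := by
    funext z
    show (K z.1).bind m' = KoccK z
    rw [hm']
    rw [show KoccK z = ((K.comap (fun z : X × Bool × X => z.1) measurable_fst) z).bind ⇑markBig
      from Kernel.comp_apply _ _ z, Kernel.comap_apply]
  -- stationarity of Pocc
  have hstat : (Pocc P A ρ α).bind ⇑KoccK = Pocc P A ρ α := by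
    rw [hPb, Measure.bind_bind hm'meas.aemeasurable KoccK.measurable.aemeasurable]
    have hx : ∀ x, (m' x).bind ⇑KoccK = (K x).bind m' := by
      intro x
      haveI := hmarkprob x
      have hι : Measurable (fun sy : Bool × X => (x, sy.1, sy.2)) := measurable_prodMk_left
      rw [show m' x = (mark P A ρ α x).map (fun sy => (x, sy.1, sy.2)) from rfl,
        bind_map' hι KoccK.measurable]
      have hcc : (fun sy : Bool × X => (KoccK (x, sy.1, sy.2) : Measure (X × Bool × X)))
          = fun _ => (K x).bind m' := by
        funext sy
        rw [show KoccK (x, sy.1, sy.2)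
            = ((K.comap (fun z : X × Bool × X => z.1) measurable_fst) (x, sy.1, sy.2)).bind ⇑markBig
          from Kernel.comp_apply _ _ _, Kernel.comap_apply, hm']
      rw [hcc, Measure.bind_const, measure_univ, one_smul]
    rw [funext hx, ← Measure.bind_bind K.measurable.aemeasurable hm'meas.aemeasurable, hK.def]
  -- measurability of focc
  have hfoccm : Measurable (focc f) := by
    have h1 : MeasurableSet {z : X × Bool × X | z.2.1 = true} :=
      (measurable_fst.comp measurable_snd) (measurableSet_singleton true)
    exact Measurable.ite h1 (hfm.comp (measurable_snd.comp measurable_snd))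
      (hfm.comp measurable_fst)
  -- integrability of f
  have hfP : Integrable f P := hf.integrable one_le_two
  have hfcond : ∀ i, Integrable f (P[|A i]) := fun i => by
    rw [show P[|A i] = (P (A i))⁻¹ • P.restrict (A i) from rfl]
    exact (hfP.restrict).smul_measure (by simp [(hpos i).ne'])
  -- helper facts about functions factoring through ρ
  have hcompρ : ∀ g : Fin R → ℝ, Measurable (fun x => g (ρ x)) :=
    fun g => (measurable_of_countable g).comp hρm
  have hintρ : ∀ g : Fin R → ℝ, Integrable (fun x => g (ρ x)) P := fun g => by
    refine Integrable.mono' (integrable_const (∑ i, ‖g i‖)) (hcompρ g).aestronglyMeasurable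
      (Filter.Eventually.of_forall fun x => ?_)
    exact Finset.single_le_sum (f := fun i => ‖g i‖) (fun i _ => norm_nonneg _)
      (Finset.mem_univ (ρ x))
  -- the inner integral over the mark kernel
  have hin : ∀ (g : X → ℝ), Measurable g → (∀ i, Integrable g (P[|A i])) →
      ∀ x, ∫ sy, (if sy.1 then g sy.2 else g x) ∂(markK x)
        = α (ρ x) * (∫ y, g y ∂(P[|A (ρ x)])) + (1 - α (ρ x)) * g x := by
    intro g hgm hgc x
    haveI := hcondP (ρ x)
    have hg2 : Measurable (fun sy : Bool × X => if sy.1 then g sy.2 else g x) := by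
      have h1 : MeasurableSet {sy : Bool × X | sy.1 = true} :=
        measurable_fst (measurableSet_singleton true)
      exact Measurable.ite h1 (hgm.comp measurable_snd) measurable_const
    have h1i : Integrable (fun y => if true = true then g y else g x) (P[|A (ρ x)]) := by
      simpa using hgc (ρ x)
    have h0i : Integrable (fun y : X => if false = true then g y else g x) (P[|A (ρ x)]) := by
      simpa using (integrable_const (g x) : Integrable (fun _ : X => g x) (P[|A (ρ x)]))
    have := integral_bern_prod (hα0 (ρ x)) (hα1 (ρ x)) (P[|A (ρ x)]) hg2 h1i h0i
    rw [show (markK x : Measure (Bool × X)) = (bern (α (ρ x))).prod (P[|A (ρ x)]) from rfl, this]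
    simp
  -- pointwise integrability over the mark kernel
  have hptint : ∀ x, Integrable (fun sy => focc f (x, sy)) (markK x) := by
    intro x
    haveI := hcondP (ρ x)
    have hg2 : Measurable (fun sy : Bool × X => focc f (x, sy)) :=
      hfoccm.comp measurable_prodMk_left
    refine integrable_bern_prod (P[|A (ρ x)]) hg2 ?_ ?_
    · simpa [focc] using hfcond (ρ x)
    · simpa [focc] using (integrable_const (f x) : Integrable (fun _ : X => f x) (P[|A (ρ x)]))
  -- norms
  have hnormeq : ∀ x, (fun sy : Bool × X => ‖focc f (x, sy)‖)
      = fun sy => if sy.1 then ‖f sy.2‖ else ‖f x‖ := by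
    intro x
    funext sy
    exact apply_ite norm _ _ _
  -- integrability of focc under Pocc
  have hbdd : ∃ C, ∀ x, ‖1 - α (ρ x)‖ ≤ C := by
    refine ⟨1, fun x => ?_⟩
    rw [Real.norm_eq_abs, abs_le]
    constructor <;> [linarith [hα1 (ρ x)]; linarith [hα0 (ρ x)]]
  have hinteg : Integrable (focc f) (Pocc P A ρ α) := by
    rw [hPocc]
    refine (Measure.integrable_compProd_iff hfoccm.aestronglyMeasurable).2
      ⟨Filter.Eventually.of_forall hptint, ?_⟩
    have heq : (fun x => ∫ sy, ‖focc f (x, sy)‖ ∂(markK x))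
        = fun x => α (ρ x) * (∫ y, ‖f y‖ ∂(P[|A (ρ x)])) + (1 - α (ρ x)) * ‖f x‖ := by
      funext x
      rw [hnormeq x]
      exact hin (fun y => ‖f y‖) hfm.norm (fun i => (hfcond i).norm) x
    rw [heq]
    exact (hintρ (fun i => α i * ∫ y, ‖f y‖ ∂(P[|A i]))).add
      ((hfP.norm).bdd_mul ((measurable_const.sub (hcompρ α)).aestronglyMeasurable) (ae_of_all _ hbdd.choose_spec))
  -- the expectation of focc under Pocc equals P(f)
  have hρeq : ∀ i, ∀ x ∈ A i, ρ x = i := by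
    intro i x hx
    by_contra hne
    exact Set.disjoint_left.1 (hdisj hne) (hρ x) hx
  have hsplit : ∀ (g : X → ℝ), Integrable g P → ∫ x, g x ∂P = ∑ i, ∫ x in A i, g x ∂P := by
    intro g hg
    rw [← setIntegral_univ (f := g) (μ := P), ← hcover,
      integral_iUnion hA hdisj hg.integrableOn, tsum_fintype]
  have hPoccInt : ∫ z, focc f z ∂(Pocc P A ρ α) = ∫ x, f x ∂P := by
    have hinteg' : Integrable (focc f) (P ⊗ₘ markK) := by rw [← hPocc]; exact hinteg
    rw [hPocc, Measure.integral_compProd hinteg']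
    have heq : (fun x => ∫ sy, focc f (x, sy) ∂(markK x))
        = fun x => α (ρ x) * (∫ y, f y ∂(P[|A (ρ x)])) + (1 - α (ρ x)) * f x := by
      funext x
      exact hin f hfm hfcond x
    rw [show (∫ x, ∫ sy, focc f (x, sy) ∂(markK x) ∂P)
        = ∫ x, (α (ρ x) * (∫ y, f y ∂(P[|A (ρ x)])) + (1 - α (ρ x)) * f x) ∂P
      from congrArg _ heq]
    have hh_int : Integrable
        (fun x => α (ρ x) * (∫ y, f y ∂(P[|A (ρ x)])) + (1 - α (ρ x)) * f x) P :=
      (hintρ (fun i => α i * ∫ y, f y ∂(P[|A i]))).add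
        (hfP.bdd_mul ((measurable_const.sub (hcompρ α)).aestronglyMeasurable) (ae_of_all _ hbdd.choose_spec))
    rw [hsplit _ hh_int, hsplit f hfP]
    refine Finset.sum_congr rfl fun i _ => ?_
    have h1 : ∫ x in A i, (α (ρ x) * (∫ y, f y ∂(P[|A (ρ x)])) + (1 - α (ρ x)) * f x) ∂P
        = ∫ x in A i, (α i * (∫ y, f y ∂(P[|A i])) + (1 - α i) * f x) ∂P := by
      refine setIntegral_congr_fun (hA i) fun x hx => ?_
      rw [hρeq i x hx]
    rw [h1, integral_add (integrable_const _) ((hfP.integrableOn).const_mul _),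
      setIntegral_const, integral_const_mul]
    have hT : (P (A i)).toReal ≠ 0 :=
      ENNReal.toReal_ne_zero.2 ⟨(hpos i).ne', measure_ne_top P _⟩
    have hc : (∫ y, f y ∂(P[|A i])) * (P (A i)).toReal = ∫ x in A i, f x ∂P := by
      rw [show P[|A i] = (P (A i))⁻¹ • P.restrict (A i) from rfl, integral_smul_measure,
        ENNReal.toReal_inv, smul_eq_mul]
      field_simp
    rw [smul_eq_mul, ← hc, measureReal_def]
    ring
  -- assemble
  rw [hKocc]
  have hmarg : ∀ t : Fin n,
      (chainLawF (Pocc P A ρ α) (⇑KoccK) n).map (fun zs => zs t) = Pocc P A ρ α :=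
    chain_marginal (Pocc P A ρ α) KoccK hstat n
  have hint_t : ∀ t : Fin n,
      Integrable (fun zs : Fin n → X × Bool × X => focc f (zs t))
        (chainLawF (Pocc P A ρ α) (⇑KoccK) n) := by
    intro t
    have h := hinteg
    rw [← hmarg t] at h
    exact (integrable_map_measure hfoccm.aestronglyMeasurable
      (measurable_pi_apply t).aemeasurable).1 h
  have hterm : ∀ t : Fin n,
      ∫ zs, focc f (zs t) ∂(chainLawF (Pocc P A ρ α) (⇑KoccK) n) = ∫ x, f x ∂P := by
    intro t
    rw [← hPoccInt]
    conv_rhs => rw [← hmarg t]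
    rw [integral_map (measurable_pi_apply t).aemeasurable hfoccm.aestronglyMeasurable]
  rw [integral_const_mul, integral_finset_sum _ (fun t _ => hint_t t)]
  rw [Finset.sum_congr rfl (fun t _ => hterm t), Finset.sum_const, Finset.card_univ,
    Fintype.card_fin, nsmul_eq_mul]
  rw [← mul_assoc, inv_mul_cancel₀ (by exact_mod_cast hn.ne' : (n:ℝ) ≠ 0), one_mul]


end OcclusionPaper
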